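/- If a, b, c, d, e, f are integers and the equation a·x² + b·x·y + c·y² + d·x + e·y + f = 0 has at least one integer solution with max(|x|, |y|) > 20 · (max(|a|,|b|,|c|,|d|,|e|,|f|))⁴, then the equation has infinitely many integer solutions. -/

import Mathlib

set_option maxHeartbeats 1000000

lemma absmul_le {u v M : ℤ} (hu : |u| ≤ M) (hv : |v| ≤ M) : |u*v| ≤ M*M := by
  rw [abs_mul]
  exact mul_le_mul hu hv (abs_nonneg v) ((abs_nonneg u).trans hu)

lemma abs3 {u v w M : ℤ} (hu : |u| ≤ M) (hv : |v| ≤ M) (hw : |w| ≤ M) : |u*v*w| ≤ M*M*M := by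
  have h0 : (0:ℤ) ≤ M := le_trans (abs_nonneg u) hu
  rw [abs_mul, abs_mul]
  exact mul_le_mul (mul_le_mul hu hv (abs_nonneg v) h0) hw (abs_nonneg w) (by positivity)

lemma abs_sub_le' (u v : ℤ) : |u - v| ≤ |u| + |v| := by
  calc |u - v| = |u + -v| := by ring_nf
  _ ≤ |u| + |-v| := abs_add_le _ _
  _ = |u| + |v| := by rw [abs_neg]

lemma sum_abs_le_of_mul {u v N : ℤ} (h : u * v = N) (hN : N ≠ 0) :
    |u| + |v| ≤ |N| + 1 := by
  have hu : u ≠ 0 := by rintro rfl; simp at h; omega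
  have hv : v ≠ 0 := by rintro rfl; simp at h; omega
  have hu1 : 1 ≤ |u| := Int.one_le_abs hu
  have hv1 : 1 ≤ |v| := Int.one_le_abs hv
  have habs : |u| * |v| = |N| := by rw [← abs_mul, h]
  nlinarith

lemma bridge' (a b c d e f x y : ℤ)
    (h : a*x^2 + b*x*y + c*y^2 + d*x + e*y + f = 0) :
    (2*c*y + b*x + e)^2 = (b^2-4*a*c)*x^2 + (2*b*e-4*c*d)*x + (e^2-4*c*f) := by
  linear_combination 4*c*h

lemma bound_side (a b c d e f M m x y : ℤ) (hcne : c ≠ 0) (hM1 : 1 ≤ M)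
    (ha : |a| ≤ M) (hb : |b| ≤ M) (hcM : |c| ≤ M) (hd : |d| ≤ M) (he : |e| ≤ M) (hf : |f| ≤ M)
    (hm1 : 1 ≤ m) (hmD : b^2 - 4*a*c = m*m)
    (heq : a*x^2 + b*x*y + c*y^2 + d*x + e*y + f = 0)
    (hΔ : a*e^2 + c*d^2 - b*d*e + (b^2-4*a*c)*f ≠ 0) :
    |x| ≤ 20*M^4 := by
  have hM0 : (0:ℤ) ≤ M := by linarith
  have hz := bridge' a b c d e f x y heq
  obtain ⟨N, hN⟩ : ∃ N : ℤ, N = (2*b*e-4*c*d)^2 - 4*(m*m)*(e^2-4*c*f) := ⟨_, rfl⟩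
  have hNid : N = 16*c*(a*e^2 + c*d^2 - b*d*e + (b^2-4*a*c)*f) := by
    rw [hN]; linear_combination (4*(e^2-4*c*f))*hmD
  have hNne : N ≠ 0 := by
    rw [hNid]
    exact mul_ne_zero (mul_ne_zero (by norm_num) hcne) hΔ
  have hfac : (2*m*(2*c*y + b*x + e) - (2*(m*m)*x + (2*b*e-4*c*d))) *
      (2*m*(2*c*y + b*x + e) + (2*(m*m)*x + (2*b*e-4*c*d))) = -N := by
    rw [hN]
    linear_combination 4*(m*m)*hz + 4*(m*m)*x^2*hmD
  have hNne' : -N ≠ 0 := neg_ne_zero.mpr hNne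
  have hsum := sum_abs_le_of_mul hfac hNne'
  rw [abs_neg] at hsum
  have hW : |4*(m*m)*x + 2*(2*b*e-4*c*d)| ≤ |N| + 1 := by
    have h1 : 4*(m*m)*x + 2*(2*b*e-4*c*d) =
        (2*m*(2*c*y + b*x + e) + (2*(m*m)*x + (2*b*e-4*c*d))) -
        (2*m*(2*c*y + b*x + e) - (2*(m*m)*x + (2*b*e-4*c*d))) := by ring
    rw [h1]
    calc _ ≤ |2*m*(2*c*y + b*x + e) + (2*(m*m)*x + (2*b*e-4*c*d))| +
        |2*m*(2*c*y + b*x + e) - (2*(m*m)*x + (2*b*e-4*c*d))| := abs_sub_le' _ _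
    _ ≤ |N| + 1 := by linarith
  have hbe : |b*e| ≤ M*M := absmul_le hb he
  have hcd : |c*d| ≤ M*M := absmul_le hcM hd
  have hg6 : |2*b*e-4*c*d| ≤ 6*(M*M) := by
    have k1 : |2*(b*e)| = 2*|b*e| := by rw [abs_mul]; norm_num
    have k2 : |4*(c*d)| = 4*|c*d| := by rw [abs_mul]; norm_num
    calc |2*b*e-4*c*d| = |2*(b*e)-4*(c*d)| := by ring_nf
    _ ≤ |2*(b*e)| + |4*(c*d)| := abs_sub_le' _ _
    _ ≤ 6*(M*M) := by rw [k1, k2]; linarith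
  have hΔbnd : |a*e^2 + c*d^2 - b*d*e + (b^2-4*a*c)*f| ≤ 3*(M*M*M) + (m*m)*M := by
    rw [hmD]
    have t1 : |a*e^2| ≤ M*M*M := by rw [show a*e^2 = a*e*e by ring]; exact abs3 ha he he
    have t2 : |c*d^2| ≤ M*M*M := by rw [show c*d^2 = c*d*d by ring]; exact abs3 hcM hd hd
    have t3 : |b*d*e| ≤ M*M*M := abs3 hb hd he
    have t4 : |(m*m)*f| ≤ (m*m)*M := by
      rw [abs_mul, abs_of_nonneg (by positivity : (0:ℤ) ≤ m*m)]
      exact mul_le_mul_of_nonneg_left hf (by positivity)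
    calc |a*e^2 + c*d^2 - b*d*e + (m*m)*f|
        ≤ |a*e^2 + c*d^2 - b*d*e| + |(m*m)*f| := abs_add_le _ _
      _ ≤ (|a*e^2 + c*d^2| + |b*d*e|) + |(m*m)*f| := by
          linarith [abs_sub_le' (a*e^2 + c*d^2) (b*d*e)]
      _ ≤ ((|a*e^2| + |c*d^2|) + |b*d*e|) + |(m*m)*f| := by
          linarith [abs_add_le (a*e^2) (c*d^2)]
      _ ≤ 3*(M*M*M) + (m*m)*M := by linarith
  have hNbnd : |N| ≤ 16*M*(3*(M*M*M) + (m*m)*M) := by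
    have k3 : |N| = 16*(|c| * |a*e^2 + c*d^2 - b*d*e + (b^2-4*a*c)*f|) := by
      rw [hNid, show 16*c*(a*e^2 + c*d^2 - b*d*e + (b^2-4*a*c)*f) =
        16*(c*(a*e^2 + c*d^2 - b*d*e + (b^2-4*a*c)*f)) by ring, abs_mul, abs_mul]
      norm_num
    have k4 : |c| * |a*e^2 + c*d^2 - b*d*e + (b^2-4*a*c)*f| ≤ M * (3*(M*M*M) + (m*m)*M) :=
      mul_le_mul hcM hΔbnd (abs_nonneg _) hM0
    rw [k3]
    linarith [k4]
  have hxabs : 4*(m*m)*|x| ≤ |N| + 1 + 12*(M*M) := by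
    have h2 : |4*(m*m)*x| ≤ |4*(m*m)*x + 2*(2*b*e-4*c*d)| + |2*(2*b*e-4*c*d)| := by
      calc |4*(m*m)*x| = |(4*(m*m)*x + 2*(2*b*e-4*c*d)) - 2*(2*b*e-4*c*d)| := by ring_nf
      _ ≤ _ := abs_sub_le' _ _
    have h3 : |2*(2*b*e-4*c*d)| = 2*|2*b*e-4*c*d| := by rw [abs_mul]; norm_num
    have h4 : |4*(m*m)*x| = 4*(m*m)*|x| := by
      rw [abs_mul, abs_of_nonneg (by positivity : (0:ℤ) ≤ 4*(m*m))]
    linarith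
  -- final arithmetic:  4 K X ≤ 48 M^4 + 16 K M^2 + 12 M^2 + 1  with K = m*m ≥ 1 forces X ≤ 20 M^4
  obtain ⟨K, hK⟩ : ∃ K : ℤ, K = m*m := ⟨_, rfl⟩
  obtain ⟨X, hXd⟩ : ∃ X : ℤ, X = |x| := ⟨_, rfl⟩
  have hm0 : (0:ℤ) ≤ m := by linarith
  have hK1 : (1:ℤ) ≤ K := by
    rw [hK]
    have := mul_le_mul hm1 hm1 (by norm_num) hm0
    linarith
  have hX0 : (0:ℤ) ≤ X := hXd ▸ abs_nonneg x
  have hmain : 4*K*X ≤ 48*M^4 + 16*K*M^2 + 12*M^2 + 1 := by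
    rw [hK, hXd]
    linarith [hxabs, hNbnd]
  have hM2 : (1:ℤ) ≤ M^2 := by nlinarith
  have hM42 : M^2 ≤ M^4 := by nlinarith [mul_le_mul_of_nonneg_right hM2 (sq_nonneg M)]
  rw [← hXd]
  by_contra hcon
  push_neg at hcon
  have hX20 : 20*M^4 + 1 ≤ X := hcon
  have h5 : 4*K*(20*M^4 + 1) ≤ 4*K*X :=
    mul_le_mul_of_nonneg_left hX20 (by positivity)
  have e1 : 0 ≤ (K - 1)*(M^4) := mul_nonneg (by linarith) (by positivity)
  have e2 : 0 ≤ K*(M^4 - M^2) := mul_nonneg (by linarith) (by linarith)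
  have e3 : 12*M^2 + 4 ≤ 16*M^4 := by nlinarith [hM42, hM2]
  linarith [h5, hmain, e1, e2, e3]

lemma bridge (a b c d e f x y : ℤ) (hc : c ≠ 0)
    (h : (2*c*y + b*x + e)^2 = (b^2-4*a*c)*x^2 + (2*b*e-4*c*d)*x + (e^2-4*c*f)) :
    a*x^2 + b*x*y + c*y^2 + d*x + e*y + f = 0 := by
  have h4 : (4:ℤ)*c ≠ 0 := by simp [hc]
  apply mul_left_cancel₀ h4
  linear_combination h

lemma growth_aux (D P Q w z : ℤ) (hP : 2 ≤ P) (hpos : 0 < w^2 + z^2)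
    (h : (P*w - D*Q*z)^2 + (P*z - Q*w)^2 ≤ (P*w + D*Q*z)^2 + (Q*w + P*z)^2) :
    w^2 + z^2 < (P*w + D*Q*z)^2 + (Q*w + P*z)^2 := by
  have h4 : (4:ℤ) ≤ P^2 := by nlinarith
  have key : (P^2 - 4) * (w^2 + z^2) ≥ 0 :=
    mul_nonneg (by linarith) (by linarith)
  nlinarith [sq_nonneg (D*Q*z), sq_nonneg (Q*w)]

/-- Step of the Pell orbit: apply the automorphism or its inverse, whichever grows the norm. -/
def pellStep (D P Q : ℤ) (p : ℤ × ℤ) : ℤ × ℤ :=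
  if (P*p.1 - D*Q*p.2)^2 + (P*p.2 - Q*p.1)^2 ≤ (P*p.1 + D*Q*p.2)^2 + (Q*p.1 + P*p.2)^2
  then (P*p.1 + D*Q*p.2, Q*p.1 + P*p.2)
  else (P*p.1 - D*Q*p.2, P*p.2 - Q*p.1)

lemma pellStep_norm (D P Q : ℤ) (hPQ : P^2 - D*Q^2 = 1) (p : ℤ × ℤ) :
    (pellStep D P Q p).1^2 - D * (pellStep D P Q p).2^2 = p.1^2 - D * p.2^2 := by
  unfold pellStep
  split <;> simp only <;> linear_combination (p.1^2 - D*p.2^2) * hPQ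

lemma pellStep_cong (D P Q L : ℤ) (hP : L ∣ P - 1) (hQ : L ∣ Q) (p : ℤ × ℤ) :
    L ∣ (pellStep D P Q p).1 - p.1 ∧ L ∣ (pellStep D P Q p).2 - p.2 := by
  unfold pellStep
  split <;> simp only <;> constructor
  · have : P*p.1 + D*Q*p.2 - p.1 = (P-1)*p.1 + (D*p.2)*Q := by ring
    rw [this]; exact dvd_add (hP.mul_right _) (hQ.mul_left _)
  · have : Q*p.1 + P*p.2 - p.2 = p.1*Q + (P-1)*p.2 := by ring
    rw [this]; exact dvd_add (hQ.mul_left _) (hP.mul_right _)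
  · have : P*p.1 - D*Q*p.2 - p.1 = (P-1)*p.1 - (D*p.2)*Q := by ring
    rw [this]; exact dvd_sub (hP.mul_right _) (hQ.mul_left _)
  · have : P*p.2 - Q*p.1 - p.2 = (P-1)*p.2 - p.1*Q := by ring
    rw [this]; exact dvd_sub (hP.mul_right _) (hQ.mul_left _)

lemma pellStep_growth (D P Q : ℤ) (hP : 2 ≤ P) (p : ℤ × ℤ)
    (hpos : 0 < p.1^2 + p.2^2) :
    p.1^2 + p.2^2 < (pellStep D P Q p).1^2 + (pellStep D P Q p).2^2 := by
  unfold pellStep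
  split
  · next h =>
    simpa using growth_aux D P Q p.1 p.2 hP hpos h
  · next h =>
    push_neg at h
    have h' : (P*p.1 - D*(-Q)*p.2)^2 + (P*p.2 - (-Q)*p.1)^2 ≤
        (P*p.1 + D*(-Q)*p.2)^2 + ((-Q)*p.1 + P*p.2)^2 := by
      ring_nf
      ring_nf at h
      linarith
    have := growth_aux D P (-Q) p.1 p.2 hP hpos h'
    simp only
    ring_nf
    ring_nf at this
    linarith

/-- There is a nontrivial Pell solution congruent to (1,0) modulo any nonzero L. -/
lemma pell_cong_exists (D L : ℤ) (hD0 : 0 < D) (hD : ¬ IsSquare D) (hL : L ≠ 0) :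
    ∃ P Q : ℤ, P^2 - D*Q^2 = 1 ∧ 2 ≤ P ∧ Q ≠ 0 ∧ L ∣ P - 1 ∧ L ∣ Q := by
  obtain ⟨p, q, hpq, hq⟩ := Pell.exists_of_not_isSquare hD0 hD
  set p' := |p| with hp'
  set q' := |q| with hq'
  have hpq' : p'^2 - D*q'^2 = 1 := by rw [hp', hq', sq_abs, sq_abs]; exact hpq
  have hq'1 : 1 ≤ q' := Int.one_le_abs hq
  have hp'2 : 2 ≤ p' := by nlinarith [abs_nonneg p, sq_abs p]
  set s : ℕ → ℤ × ℤ := fun n => Nat.rec ((1:ℤ), (0:ℤ))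
    (fun _ r => (p'*r.1 + D*q'*r.2, p'*r.2 + q'*r.1)) n with hs
  have hs0 : s 0 = (1, 0) := rfl
  have hstep : ∀ n, s (n+1) = (p'*(s n).1 + D*q'*(s n).2, p'*(s n).2 + q'*(s n).1) :=
    fun n => rfl
  have hnorm : ∀ n, (s n).1^2 - D*(s n).2^2 = 1 := by
    intro n
    induction n with
    | zero => simp [hs0]
    | succ n ih => rw [hstep]; simp only
                   linear_combination ((s n).1^2 - D*(s n).2^2)*hpq' + ih
  have hpos : ∀ n, 1 ≤ (s n).1 ∧ (n : ℤ) ≤ (s n).2 := by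
    intro n
    induction n with
    | zero => simp [hs0]
    | succ n ih =>
      obtain ⟨ih1, ih2⟩ := ih
      have hn0 : (0:ℤ) ≤ (n:ℤ) := Nat.cast_nonneg n
      have hy0 : (0:ℤ) ≤ (s n).2 := le_trans hn0 ih2
      have h1 : 0 ≤ D*q'*(s n).2 := mul_nonneg (mul_nonneg hD0.le (by linarith)) hy0
      have h2 : 2 ≤ p'*(s n).1 := by nlinarith
      have h3 : (s n).2 ≤ p'*(s n).2 := by nlinarith
      have h4 : 1 ≤ q'*(s n).1 := by nlinarith
      rw [hstep]; simp only
      constructor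
      · linarith
      · push_cast; linarith
  have hmono : StrictMono (fun n => (s n).2) := by
    apply strictMono_nat_of_lt_succ
    intro n
    obtain ⟨ih1, ih2⟩ := hpos n
    have hn0 : (0:ℤ) ≤ (n:ℤ) := Nat.cast_nonneg n
    have hy0 : (0:ℤ) ≤ (s n).2 := le_trans hn0 ih2
    have h3 : (s n).2 ≤ p'*(s n).2 := by nlinarith
    have h4 : 1 ≤ q'*(s n).1 := by nlinarith
    rw [hstep]; simp only
    linarith
  haveI : NeZero L.natAbs := ⟨Int.natAbs_ne_zero.mpr hL⟩
  obtain ⟨n, m, hnm, hcong⟩ := Finite.exists_ne_map_eq_of_infinite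
    (fun n => (((s n).1 : ZMod L.natAbs), ((s n).2 : ZMod L.natAbs)))
  wlog hlt : n < m generalizing n m
  · exact this m n hnm.symm hcong.symm (by omega)
  have hd1 : L ∣ (s m).1 - (s n).1 := by
    have h := congrArg Prod.fst hcong
    simp only at h
    rw [ZMod.intCast_eq_intCast_iff'] at h
    exact Int.natAbs_dvd.mp (Int.ModEq.dvd h)
  have hd2 : L ∣ (s m).2 - (s n).2 := by
    have h := congrArg Prod.snd hcong
    simp only at h
    rw [ZMod.intCast_eq_intCast_iff'] at h
    exact Int.natAbs_dvd.mp (Int.ModEq.dvd h)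
  set A := (s m).1; set B := (s m).2; set C := (s n).1; set E := (s n).2
  set P₀ : ℤ := A*C - D*B*E with hP₀
  set Q₀ : ℤ := B*C - A*E with hQ₀
  have hnorm₀ : P₀^2 - D*Q₀^2 = 1 := by
    rw [hP₀, hQ₀]
    linear_combination (C^2 - D*E^2)*(hnorm m) + (hnorm n)
  have hQ₀ne : Q₀ ≠ 0 := by
    intro h0
    have hBC : B*C = A*E := by rw [hQ₀] at h0; linarith
    have hBC0 : B*C - A*E = 0 := by rw [hBC]; ring
    have hBE : B^2 = E^2 := by
      have e1 := hnorm n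
      have e2 := hnorm m
      linear_combination (-(B^2))*e1 + E^2*e2 + (B*C+A*E)*hBC0
    have hEB : E < B := hmono hlt
    have hE0 : 0 ≤ E := le_trans (Nat.cast_nonneg n) (hpos n).2
    nlinarith
  have hdP₀ : L ∣ P₀ - 1 := by
    have h : P₀ - 1 = C*(A - C) - (D*E)*(B - E) + (C^2 - D*E^2 - 1) := by
      rw [hP₀]; ring
    rw [h, hnorm n]
    simpa using dvd_sub (hd1.mul_left C) (hd2.mul_left (D*E))
  have hdQ₀ : L ∣ Q₀ := by
    have h : Q₀ = C*(B - E) - E*(A - C) := by rw [hQ₀]; ring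
    rw [h]
    exact dvd_sub (hd2.mul_left C) (hd1.mul_left E)
  refine ⟨P₀^2 + D*Q₀^2, 2*P₀*Q₀, by linear_combination (P₀^2 - D*Q₀^2 + 1)*hnorm₀, ?_, ?_, ?_, ?_⟩
  · have hQ₀0 : Q₀^2 ≠ 0 := pow_ne_zero 2 hQ₀ne
    have hQ₀nn : 0 ≤ Q₀^2 := sq_nonneg _
    have hQ₀1 : 1 ≤ Q₀^2 := by omega
    nlinarith
  · have hP₀ne : P₀ ≠ 0 := by
      intro h0
      rw [h0] at hnorm₀
      nlinarith [sq_nonneg Q₀]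
    exact mul_ne_zero (mul_ne_zero two_ne_zero hP₀ne) hQ₀ne
  · have h : P₀^2 + D*Q₀^2 - 1 = (2*D*Q₀)*Q₀ + (P₀^2 - D*Q₀^2 - 1) := by ring
    rw [h, hnorm₀]
    simpa using hdQ₀.mul_left (2*D*Q₀)
  · exact hdQ₀.mul_left (2*P₀)

lemma pell_orbit (D P Q W Z L : ℤ) (hPQ : P^2 - D*Q^2 = 1) (hP : 2 ≤ P)
    (hLP : L ∣ P - 1) (hLQ : L ∣ Q) (hWZ : 0 < W^2 + Z^2) :
    ∃ v : ℕ → ℤ × ℤ, (∀ n, (v n).1^2 - D*(v n).2^2 = W^2 - D*Z^2) ∧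
      (∀ n, L ∣ (v n).1 - W ∧ L ∣ (v n).2 - Z) ∧ Function.Injective v := by
  set v : ℕ → ℤ × ℤ := fun n => (pellStep D P Q)^[n] (W, Z) with hv
  have hv0 : v 0 = (W, Z) := rfl
  have hstep : ∀ n, v (n+1) = pellStep D P Q (v n) := by
    intro n; rw [hv]; simp [Function.iterate_succ_apply']
  have hnorm : ∀ n, (v n).1^2 - D*(v n).2^2 = W^2 - D*Z^2 := by
    intro n; induction n with
    | zero => rw [hv0]
    | succ n ih => rw [hstep, pellStep_norm D P Q hPQ]; exact ih
  have hposn : ∀ n, 0 < (v n).1^2 + (v n).2^2 := by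
    intro n; induction n with
    | zero => rw [hv0]; exact hWZ
    | succ n ih => rw [hstep]; exact lt_trans ih (pellStep_growth D P Q hP _ ih)
  have hmono : StrictMono (fun n => (v n).1^2 + (v n).2^2) := by
    apply strictMono_nat_of_lt_succ
    intro n; rw [hstep]; exact pellStep_growth D P Q hP _ (hposn n)
  refine ⟨v, hnorm, ?_, ?_⟩
  · intro n; induction n with
    | zero => rw [hv0]; simp
    | succ n ih =>
      obtain ⟨ih1, ih2⟩ := ih
      obtain ⟨c1, c2⟩ := pellStep_cong D P Q L hLP hLQ (v n)
      rw [hstep]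
      constructor
      · have : (pellStep D P Q (v n)).1 - W = ((pellStep D P Q (v n)).1 - (v n).1) + ((v n).1 - W) := by ring
        rw [this]; exact dvd_add c1 ih1
      · have : (pellStep D P Q (v n)).2 - Z = ((pellStep D P Q (v n)).2 - (v n).2) + ((v n).2 - Z) := by ring
        rw [this]; exact dvd_add c2 ih2
  · intro n m hnm
    by_contra hne
    rcases Nat.lt_or_ge n m with h | h
    · exact absurd (congrArg (fun p : ℤ × ℤ => p.1^2 + p.2^2) hnm) (ne_of_lt (hmono h))
    · have h' : m < n := by omega
      exact absurd (congrArg (fun p : ℤ × ℤ => p.1^2 + p.2^2) hnm).symm (ne_of_lt (hmono h'))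

lemma neg_bounds (a b c d e f M x y : ℤ) (hcne : c ≠ 0) (hM1 : 1 ≤ M)
    (ha : |a| ≤ M) (hb : |b| ≤ M) (hcM : |c| ≤ M) (hd : |d| ≤ M) (he : |e| ≤ M) (hf : |f| ≤ M)
    (hD : b^2 - 4*a*c < 0)
    (heq : a*x^2 + b*x*y + c*y^2 + d*x + e*y + f = 0) :
    |x| ≤ 20*M^4 ∧ |y| ≤ 20*M^4 := by
  have hM0 : (0:ℤ) ≤ M := by linarith
  have hM2 : (1:ℤ) ≤ M*M := by nlinarith
  have hM32 : M*M ≤ M*M*M := by nlinarith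
  have hM43 : M*M*M ≤ M*M*M*M := by nlinarith
  have hM21 : M ≤ M*M := by nlinarith
  have hz := bridge' a b c d e f x y heq
  have hX0 : (0:ℤ) ≤ |x| := abs_nonneg x
  -- g x ≤ 6M² |x|
  have hbe : |b*e| ≤ M*M := absmul_le hb he
  have hcd : |c*d| ≤ M*M := absmul_le hcM hd
  have hg6 : |2*b*e-4*c*d| ≤ 6*(M*M) := by
    have k1 : |2*(b*e)| = 2* |b*e| := by rw [abs_mul]; norm_num
    have k2 : |4*(c*d)| = 4* |c*d| := by rw [abs_mul]; norm_num
    calc |2*b*e-4*c*d| = |2*(b*e)-4*(c*d)| := by ring_nf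
    _ ≤ |2*(b*e)| + |4*(c*d)| := abs_sub_le' _ _
    _ ≤ 6*(M*M) := by linarith
  have hgx : (2*b*e-4*c*d)*x ≤ 6*(M*M)* |x| := by
    calc (2*b*e-4*c*d)*x ≤ |(2*b*e-4*c*d)*x| := le_abs_self _
    _ = |2*b*e-4*c*d| * |x| := abs_mul _ _
    _ ≤ 6*(M*M)* |x| := mul_le_mul_of_nonneg_right hg6 hX0
  -- h ≤ 5M²
  have he2 : e^2 ≤ M*M := by nlinarith [sq_abs e, abs_nonneg e, he]
  have hcf : |c*f| ≤ M*M := absmul_le hcM hf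
  have hh5 : e^2-4*c*f ≤ 5*(M*M) := by
    have : -(c*f) ≤ |c*f| := neg_le_abs _
    linarith
  -- D x² ≤ -x²
  have hD1 : b^2 - 4*a*c ≤ -1 := by linarith
  have hDx : (b^2-4*a*c)*x^2 ≤ -1*x^2 := mul_le_mul_of_nonneg_right hD1 (sq_nonneg x)
  have hz0 : 0 ≤ (2*c*y + b*x + e)^2 := sq_nonneg _
  have hxx : |x| * |x| ≤ 6*(M*M)* |x| + 5*(M*M) := by
    have : x^2 = |x| * |x| := by rw [abs_mul_abs_self]; ring
    nlinarith [hz, hgx, hh5, hDx, hz0]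
  -- |x| ≤ 7M²
  have hX7 : |x| ≤ 7*(M*M) := by
    by_contra hcon
    push_neg at hcon
    have h1 : 7*(M*M) + 1 ≤ |x| := hcon
    have h2 : (7*(M*M)+1)*(7*(M*M)+1) ≤ |x| * |x| :=
      mul_le_mul h1 h1 (by linarith) hX0
    have h3 : (M*M)*(7*(M*M)+1) ≤ (M*M)* |x| := mul_le_mul_of_nonneg_left h1 (by positivity)
    nlinarith [h2, hxx, h3, hM2]
  -- z² ≤ 47 M⁴, |z| ≤ 7M²
  have hMX : (M*M)* |x| ≤ (M*M)*(7*(M*M)) := mul_le_mul_of_nonneg_left hX7 (by positivity)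
  have hz47 : (2*c*y + b*x + e)^2 ≤ 47*(M*M*(M*M)) := by nlinarith [hz, hgx, hh5, hDx, sq_nonneg x, hMX]
  have hZ7 : |2*c*y + b*x + e| ≤ 7*(M*M) := by
    by_contra hcon
    push_neg at hcon
    have h1 : 7*(M*M) + 1 ≤ |2*c*y + b*x + e| := hcon
    have h2 : (7*(M*M)+1)*(7*(M*M)+1) ≤ |2*c*y + b*x + e| * |2*c*y + b*x + e| :=
      mul_le_mul h1 h1 (by linarith) (abs_nonneg _)
    rw [abs_mul_abs_self] at h2
    nlinarith [hz47, h2, hM2]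
  -- |y| bound
  have hbx : |b*x| ≤ M* |x| := by
    rw [abs_mul]; exact mul_le_mul_of_nonneg_right hb hX0
  have hMX2 : M* |x| ≤ M*(7*(M*M)) := mul_le_mul_of_nonneg_left hX7 hM0
  have hcy : |y| ≤ |c*y| := by
    rw [abs_mul]
    nlinarith [Int.one_le_abs hcne, abs_nonneg y]
  have hy2 : 2 * |y| ≤ |2*c*y| := by
    have k : |2*c*y| = 2 * |c*y| := by
      rw [show 2*c*y = 2*(c*y) by ring, abs_mul]
      norm_num
    linarith [hcy]
  have htri : |2*c*y| ≤ |2*c*y + b*x + e| + |b*x| + |e| := by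
    have k1 : |2*c*y| = |(2*c*y + b*x + e) - (b*x + e)| := by ring_nf
    have k2 : |b*x + e| ≤ |b*x| + |e| := abs_add_le _ _
    calc |2*c*y| = |(2*c*y + b*x + e) - (b*x + e)| := k1
    _ ≤ |2*c*y + b*x + e| + |b*x + e| := abs_sub_le' _ _
    _ ≤ _ := by linarith
  constructor
  · linarith [hX7, hM2, hM32, hM43, hM21]
  · linarith [htri, hZ7, hbx, hMX2, hy2, hM2, hM32, hM43, hM21, he]

lemma key (a b c d e f M x₀ y₀ : ℤ) (hc : c ≠ 0) (hM1 : 1 ≤ M)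
    (ha : |a| ≤ M) (hb : |b| ≤ M) (hcM : |c| ≤ M) (hd : |d| ≤ M) (he : |e| ≤ M) (hf : |f| ≤ M)
    (heq : a*x₀^2 + b*x₀*y₀ + c*y₀^2 + d*x₀ + e*y₀ + f = 0)
    (hbig : 20*M^4 < max |x₀| |y₀|) :
    {p : ℤ × ℤ | a*p.1^2 + b*p.1*p.2 + c*p.2^2 + d*p.1 + e*p.2 + f = 0}.Infinite := by
  have hM0 : (0:ℤ) ≤ M := by linarith
  have hM2 : (1:ℤ) ≤ M*M := by nlinarith
  have hM21 : M ≤ M*M := by nlinarith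
  have hM32 : M*M ≤ M*M*M := by nlinarith
  have hM43 : M*M*M ≤ M*M*M*M := by nlinarith
  have h2c : (2*c : ℤ) ≠ 0 := by simp [hc]
  rcases lt_trichotomy (b^2 - 4*a*c) 0 with hD | hD | hD
  · -- D < 0 : contradiction
    obtain ⟨h1, h2⟩ := neg_bounds a b c d e f M x₀ y₀ hc hM1 ha hb hcM hd he hf hD heq
    have := max_le h1 h2
    linarith
  · -- D = 0
    by_cases hg : 2*b*e - 4*c*d = 0
    · -- parallel lines
      have hg2 : b*e - 2*c*d = 0 := by linarith
      apply Set.infinite_of_injective_forall_mem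
        (f := fun t : ℤ => (x₀ + 2*c*t, y₀ - b*t))
      · intro t1 t2 hF
        have h1 : x₀ + 2*c*t1 = x₀ + 2*c*t2 := congrArg Prod.fst hF
        have h2 : 2*c*t1 = 2*c*t2 := by linarith
        exact mul_left_cancel₀ h2c h2
      · intro t
        simp only [Set.mem_setOf_eq]
        linear_combination heq + (-t*x₀ - c*t^2)*hD + (-t)*hg2
    · -- parabola
      apply Set.infinite_of_injective_forall_mem
        (f := fun t : ℤ => (x₀ + 4*c*t*(2*c*y₀+b*x₀+e) + 4*c^2*(2*b*e-4*c*d)*t^2,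
          y₀ + (2*b*e-4*c*d)*t - 2*b*t*(2*c*y₀+b*x₀+e) - 2*b*c*(2*b*e-4*c*d)*t^2))
      · intro t1 t2 hF
        have h1 := congrArg Prod.fst hF
        have h2 := congrArg Prod.snd hF
        simp only at h1 h2
        -- z-coordinate is injective:  z_t = z₀ + 2 c g t
        have h3 : 2*c*(2*b*e-4*c*d)*t1 = 2*c*(2*b*e-4*c*d)*t2 := by
          linear_combination b*h1 + 2*c*h2
        exact mul_left_cancel₀ (mul_ne_zero h2c hg) h3
      · intro t
        simp only [Set.mem_setOf_eq]
        linear_combination heq + (-t*((2*c*y₀+b*x₀+e) + c*(2*b*e-4*c*d)*t)*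
          (x₀ + (x₀ + 4*c*t*(2*c*y₀+b*x₀+e) + 4*c^2*(2*b*e-4*c*d)*t^2)))*hD
  · -- 0 < D
    by_cases hsq : IsSquare (b^2 - 4*a*c)
    · -- D = m²
      obtain ⟨m₀, hm₀⟩ := hsq
      have hm₀ne : m₀ ≠ 0 := by rintro rfl; rw [hm₀] at hD; simp at hD
      obtain ⟨m, hm1, hm⟩ : ∃ m : ℤ, 1 ≤ m ∧ b^2 - 4*a*c = m*m :=
        ⟨|m₀|, Int.one_le_abs hm₀ne, by rw [abs_mul_abs_self]; exact hm₀⟩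
      have hmne : m ≠ 0 := by linarith
      have hm4 : (4*(m*m) : ℤ) ≠ 0 := ne_of_gt (by nlinarith : (0:ℤ) < 4*(m*m))
      by_cases hΔ0 : a*e^2 + c*d^2 - b*d*e + (b^2-4*a*c)*f = 0
      · -- degenerate: two rational lines
        have hz := bridge' a b c d e f x₀ y₀ heq
        have hfac : (2*m*(2*c*y₀+b*x₀+e) - (2*(m*m)*x₀ + (2*b*e-4*c*d))) *
            (2*m*(2*c*y₀+b*x₀+e) + (2*(m*m)*x₀ + (2*b*e-4*c*d))) = 0 := by
          linear_combination 4*(m*m)*hz + (4*(m*m)*x₀^2 - 4*(e^2-4*c*f))*hm - 16*c*hΔ0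
        rcases mul_eq_zero.mp hfac with h1 | h1
        · apply Set.infinite_of_injective_forall_mem
            (f := fun t : ℤ => (x₀ + 2*c*t, y₀ + (m-b)*t))
          · intro t1 t2 hF
            have h2 : x₀ + 2*c*t1 = x₀ + 2*c*t2 := congrArg Prod.fst hF
            exact mul_left_cancel₀ h2c (by linarith)
          · intro t
            simp only [Set.mem_setOf_eq]
            apply bridge a b c d e f _ _ hc
            apply mul_left_cancel₀ hm4
            have hzt : 2*m*(2*c*(y₀ + (m-b)*t) + b*(x₀ + 2*c*t) + e) =
                2*(m*m)*(x₀ + 2*c*t) + (2*b*e-4*c*d) := by linear_combination h1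
            linear_combination (2*m*(2*c*(y₀ + (m-b)*t) + b*(x₀ + 2*c*t) + e) +
                (2*(m*m)*(x₀ + 2*c*t) + (2*b*e-4*c*d)))*hzt +
              (-4*(m*m)*(x₀ + 2*c*t)^2 + 4*(e^2-4*c*f))*hm + 16*c*hΔ0
        · apply Set.infinite_of_injective_forall_mem
            (f := fun t : ℤ => (x₀ + 2*c*t, y₀ + (-m-b)*t))
          · intro t1 t2 hF
            have h2 : x₀ + 2*c*t1 = x₀ + 2*c*t2 := congrArg Prod.fst hF
            exact mul_left_cancel₀ h2c (by linarith)
          · intro t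
            simp only [Set.mem_setOf_eq]
            apply bridge a b c d e f _ _ hc
            apply mul_left_cancel₀ hm4
            have hzt : 2*m*(2*c*(y₀ + (-m-b)*t) + b*(x₀ + 2*c*t) + e) =
                -(2*(m*m)*(x₀ + 2*c*t) + (2*b*e-4*c*d)) := by linear_combination h1
            linear_combination (2*m*(2*c*(y₀ + (-m-b)*t) + b*(x₀ + 2*c*t) + e) -
                (2*(m*m)*(x₀ + 2*c*t) + (2*b*e-4*c*d)))*hzt +
              (-4*(m*m)*(x₀ + 2*c*t)^2 + 4*(e^2-4*c*f))*hm + 16*c*hΔ0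
      · -- nondegenerate square case: height contradiction (or vertical line when a = 0)
        have hx := bound_side a b c d e f M m x₀ y₀ hc hM1 ha hb hcM hd he hf hm1 hm heq hΔ0
        by_cases ha0 : a = 0
        · subst ha0
          by_cases hq : b*y₀ + d = 0
          · apply Set.infinite_of_injective_forall_mem
              (f := fun t : ℤ => (t, y₀))
            · intro t1 t2 hF
              exact congrArg Prod.fst hF
            · intro t
              simp only [Set.mem_setOf_eq]
              linear_combination heq + (t - x₀)*hq
          · -- divisor bound on y
            have hbne : b ≠ 0 := by
              rintro rfl
              norm_num at hD
            have hid : 0*e^2 + c*d^2 - b*d*e + (b^2-4*0*c)*f =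
                (b*y₀+d)*(c*d - b*b*x₀ - b*c*y₀ - b*e) := by
              linear_combination (b*b)*heq
            have ht₀ : c*d - b*b*x₀ - b*c*y₀ - b*e ≠ 0 := by
              intro h0
              apply hΔ0
              rw [hid, h0, mul_zero]
            have hyq : |b*y₀+d| ≤ |0*e^2 + c*d^2 - b*d*e + (b^2-4*0*c)*f| := by
              rw [hid, abs_mul]
              nlinarith [Int.one_le_abs ht₀, abs_nonneg (b*y₀+d)]
            have hΔb : |0*e^2 + c*d^2 - b*d*e + (b^2-4*0*c)*f| ≤ 3*(M*M*M) := by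
              have k0 : 0*e^2 + c*d^2 - b*d*e + (b^2-4*0*c)*f = c*d*d - b*d*e + b*b*f := by
                ring
              rw [k0]
              have t1 : |c*d*d| ≤ M*M*M := abs3 hcM hd hd
              have t2 : |b*d*e| ≤ M*M*M := abs3 hb hd he
              have t3 : |b*b*f| ≤ M*M*M := abs3 hb hb hf
              calc |c*d*d - b*d*e + b*b*f| ≤ |c*d*d - b*d*e| + |b*b*f| := abs_add_le _ _
                _ ≤ (|c*d*d| + |b*d*e|) + |b*b*f| := by linarith [abs_sub_le' (c*d*d) (b*d*e)]
                _ ≤ 3*(M*M*M) := by linarith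
            have hy1 : |b*y₀| ≤ 3*(M*M*M) + M := by
              have k1 : |b*y₀| ≤ |b*y₀+d| + |d| := by
                calc |b*y₀| = |(b*y₀+d) - d| := by ring_nf
                _ ≤ |b*y₀+d| + |d| := abs_sub_le' _ _
              linarith
            have hy2 : |y₀| ≤ |b*y₀| := by
              rw [abs_mul]
              nlinarith [Int.one_le_abs hbne, abs_nonneg y₀]
            have hy : |y₀| ≤ 20*M^4 := by linarith [hy1, hy2, hM2, hM21, hM32, hM43]
            have := max_le hx hy
            linarith
        · have hy := bound_side c b a e d f M m y₀ x₀ ha0 hM1 hcM hb ha he hd hf hm1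
            (by linear_combination hm) (by linear_combination heq)
            (fun hh => hΔ0 (by linear_combination hh))
          have := max_le hx hy
          linarith
    · -- Pell case
      have hz := bridge' a b c d e f x₀ y₀ heq
      have hWZnorm : (2*(b^2-4*a*c)*x₀ + (2*b*e-4*c*d))^2 -
          (b^2-4*a*c)*(2*(2*c*y₀+b*x₀+e))^2 =
          (2*b*e-4*c*d)^2 - 4*(b^2-4*a*c)*(e^2-4*c*f) := by
        linear_combination (-(4*(b^2-4*a*c)))*hz
      by_cases h00 : 2*(b^2-4*a*c)*x₀ + (2*b*e-4*c*d) = 0 ∧ 2*c*y₀+b*x₀+e = 0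
      · -- the single central point is small: contradiction
        obtain ⟨h001, h002⟩ := h00
        have hbe : |b*e| ≤ M*M := absmul_le hb he
        have hcd : |c*d| ≤ M*M := absmul_le hcM hd
        have hg6 : |2*b*e-4*c*d| ≤ 6*(M*M) := by
          have k1 : |2*(b*e)| = 2*|b*e| := by rw [abs_mul]; norm_num
          have k2 : |4*(c*d)| = 4*|c*d| := by rw [abs_mul]; norm_num
          calc |2*b*e-4*c*d| = |2*(b*e)-4*(c*d)| := by ring_nf
          _ ≤ |2*(b*e)| + |4*(c*d)| := abs_sub_le' _ _
          _ ≤ 6*(M*M) := by linarith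
        have hDx : 2*(b^2-4*a*c)*x₀ = -(2*b*e-4*c*d) := by linarith
        have hxa : |2*(b^2-4*a*c)*x₀| ≤ 6*(M*M) := by rw [hDx, abs_neg]; exact hg6
        have hxb : 2*|x₀| ≤ |2*(b^2-4*a*c)*x₀| := by
          rw [show 2*(b^2-4*a*c)*x₀ = (2*(b^2-4*a*c))*x₀ by ring, abs_mul,
            abs_of_nonneg (by linarith : (0:ℤ) ≤ 2*(b^2-4*a*c))]
          nlinarith [abs_nonneg x₀, hD]
        have hx3 : |x₀| ≤ 3*(M*M) := by linarith
        have hcy : 2*c*y₀ = -(b*x₀+e) := by linarith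
        have hby : |b*x₀| ≤ M*|x₀| := by
          rw [abs_mul]; exact mul_le_mul_of_nonneg_right hb (abs_nonneg x₀)
        have hMx : M*|x₀| ≤ M*(3*(M*M)) := mul_le_mul_of_nonneg_left hx3 hM0
        have hy2 : 2*|y₀| ≤ |2*c*y₀| := by
          rw [show 2*c*y₀ = 2*(c*y₀) by ring, abs_mul]
          norm_num
          nlinarith [Int.one_le_abs hc, abs_nonneg y₀]
        have hbxe : |b*x₀ + e| ≤ |b*x₀| + |e| := abs_add_le _ _
        have hyb : 2*|y₀| ≤ 3*(M*M*M) + M := by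
          rw [hcy, abs_neg] at hy2
          linarith
        have hxf : |x₀| ≤ 20*M^4 := by linarith [hx3, hM2, hM21, hM32, hM43]
        have hyf : |y₀| ≤ 20*M^4 := by linarith [hyb, hM2, hM21, hM32, hM43]
        have := max_le hxf hyf
        linarith
      · have hpos : 0 < (2*(b^2-4*a*c)*x₀ + (2*b*e-4*c*d))^2 + (2*(2*c*y₀+b*x₀+e))^2 := by
          rcases not_and_or.mp h00 with h0 | h0
          · have : (2*(b^2-4*a*c)*x₀ + (2*b*e-4*c*d))^2 > 0 := by positivity
            nlinarith [sq_nonneg (2*(2*c*y₀+b*x₀+e))]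
          · have h0' : (2*(2*c*y₀+b*x₀+e)) ≠ 0 := by
              intro hz0; apply h0; linarith
            have : (2*(2*c*y₀+b*x₀+e))^2 > 0 := by positivity
            nlinarith [sq_nonneg (2*(b^2-4*a*c)*x₀ + (2*b*e-4*c*d))]
        have hL : (4*c*(b^2-4*a*c)) ≠ 0 :=
          mul_ne_zero (mul_ne_zero four_ne_zero hc) (ne_of_gt hD)
        obtain ⟨P, Q, hPQ, hP2, hQne, hLP, hLQ⟩ :=
          pell_cong_exists (b^2-4*a*c) (4*c*(b^2-4*a*c)) hD hsq hL
        obtain ⟨v, hnorm, hcong, hinj⟩ :=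
          pell_orbit (b^2-4*a*c) P Q (2*(b^2-4*a*c)*x₀ + (2*b*e-4*c*d))
            (2*(2*c*y₀+b*x₀+e)) (4*c*(b^2-4*a*c)) hPQ hP2 hLP hLQ hpos
        obtain ⟨K1, hk1⟩ : ∃ K : ℕ → ℤ, ∀ n,
            4*c*(b^2-4*a*c) * K n = (v n).1 - (2*(b^2-4*a*c)*x₀ + (2*b*e-4*c*d)) :=
          ⟨fun n => ((v n).1 - (2*(b^2-4*a*c)*x₀ + (2*b*e-4*c*d))) / (4*c*(b^2-4*a*c)),
            fun n => Int.mul_ediv_cancel' (hcong n).1⟩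
        obtain ⟨K2, hk2⟩ : ∃ K : ℕ → ℤ, ∀ n,
            4*c*(b^2-4*a*c) * K n = (v n).2 - 2*(2*c*y₀+b*x₀+e) :=
          ⟨fun n => ((v n).2 - 2*(2*c*y₀+b*x₀+e)) / (4*c*(b^2-4*a*c)),
            fun n => Int.mul_ediv_cancel' (hcong n).2⟩
        apply Set.infinite_of_injective_forall_mem
          (f := fun n : ℕ => (x₀ + 2*c*(K1 n), y₀ + (b^2-4*a*c)*(K2 n) - b*(K1 n)))
        · intro n1 n2 hF
          have h1 : x₀ + 2*c*(K1 n1) = x₀ + 2*c*(K1 n2) := congrArg Prod.fst hF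
          have hk1eq : K1 n1 = K1 n2 := mul_left_cancel₀ h2c (by linarith)
          have h2 : y₀ + (b^2-4*a*c)*(K2 n1) - b*(K1 n1) = y₀ + (b^2-4*a*c)*(K2 n2) - b*(K1 n2) :=
            congrArg Prod.snd hF
          have hk2eq : K2 n1 = K2 n2 := by
            apply mul_left_cancel₀ (ne_of_gt hD)
            rw [hk1eq] at h2
            linarith
          apply hinj
          have e1 : (v n1).1 = (v n2).1 := by
            have a1 := hk1 n1
            have a2 := hk1 n2
            rw [hk1eq] at a1
            linarith
          have e2 : (v n1).2 = (v n2).2 := by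
            have a1 := hk2 n1
            have a2 := hk2 n2
            rw [hk2eq] at a1
            linarith
          exact Prod.ext e1 e2
        · intro n
          simp only [Set.mem_setOf_eq]
          apply bridge a b c d e f _ _ hc
          apply mul_left_cancel₀ (ne_of_gt (by linarith : (0:ℤ) < 4*(b^2-4*a*c)))
          have a1 := hk1 n
          have a2 := hk2 n
          have h2z : 2*(2*c*(y₀ + (b^2-4*a*c)*(K2 n) - b*(K1 n)) + b*(x₀ + 2*c*(K1 n)) + e) = (v n).2 := by
            linear_combination a2
          have hW : 2*(b^2-4*a*c)*(x₀ + 2*c*(K1 n)) + (2*b*e-4*c*d) = (v n).1 := by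
            linear_combination a1
          linear_combination
            ((b^2-4*a*c)*(2*(2*c*(y₀ + (b^2-4*a*c)*(K2 n) - b*(K1 n)) + b*(x₀ + 2*c*(K1 n)) + e) + (v n).2))*h2z
            - ((v n).1 + 2*(b^2-4*a*c)*(x₀ + 2*c*(K1 n)) + (2*b*e-4*c*d))*hW
            - hnorm n - hWZnorm

/-- If the quadratic Diophantine equation
`a·x² + b·x·y + c·y² + d·x + e·y + f = 0` has an integer solution of height
greater than `20 · M⁴`, where `M = max(|a|,|b|,|c|,|d|,|e|,|f|)`, then it has
infinitely many integer solutions. -/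
theorem stmt_18 (a b c d e f : ℤ)
    (h : ∃ x y : ℤ,
      a * x ^ 2 + b * x * y + c * y ^ 2 + d * x + e * y + f = 0 ∧
      20 * (max |a| (max |b| (max |c| (max |d| (max |e| |f|))))) ^ 4 <
        max |x| |y|) :
    {p : ℤ × ℤ |
      a * p.1 ^ 2 + b * p.1 * p.2 + c * p.2 ^ 2 + d * p.1 + e * p.2 + f =
        0}.Infinite := by
  obtain ⟨x₀, y₀, heq, hbig⟩ := h
  obtain ⟨M, hMdef⟩ : ∃ M : ℤ, M = max |a| (max |b| (max |c| (max |d| (max |e| |f|)))) :=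
    ⟨_, rfl⟩
  rw [← hMdef] at hbig
  have ha : |a| ≤ M := hMdef ▸ le_max_left _ _
  have hb : |b| ≤ M := hMdef ▸ le_trans (le_max_left _ _) (le_max_right _ _)
  have hcM : |c| ≤ M := hMdef ▸
    le_trans (le_trans (le_max_left _ _) (le_max_right _ _)) (le_max_right _ _)
  have hd : |d| ≤ M := hMdef ▸
    le_trans (le_trans (le_trans (le_max_left _ _) (le_max_right _ _)) (le_max_right _ _))
      (le_max_right _ _)
  have he : |e| ≤ M := hMdef ▸
    le_trans (le_trans (le_trans (le_trans (le_max_left _ _) (le_max_right _ _))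
      (le_max_right _ _)) (le_max_right _ _)) (le_max_right _ _)
  have hf : |f| ≤ M := hMdef ▸
    le_trans (le_trans (le_trans (le_trans (le_max_right _ _) (le_max_right _ _))
      (le_max_right _ _)) (le_max_right _ _)) (le_max_right _ _)
  clear hMdef
  by_cases hc0 : c = 0
  · subst hc0
    by_cases ha0 : a = 0
    · subst ha0
      by_cases hb0 : b = 0
      · subst hb0
        by_cases hde : d = 0 ∧ e = 0
        · obtain ⟨rfl, rfl⟩ := hde
          have hf0 : f = 0 := by linarith [heq]
          subst hf0
          apply Set.infinite_of_injective_forall_mem (f := fun t : ℤ => ((t, 0) : ℤ × ℤ))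
          · intro t1 t2 hF
            exact congrArg Prod.fst hF
          · intro t
            simp only [Set.mem_setOf_eq]
            ring
        · apply Set.infinite_of_injective_forall_mem
            (f := fun t : ℤ => (x₀ + e*t, y₀ - d*t))
          · rcases not_and_or.mp hde with h0 | h0
            · intro t1 t2 hF
              have h2 : y₀ - d*t1 = y₀ - d*t2 := congrArg Prod.snd hF
              have h3 : d*t1 = d*t2 := by linarith
              exact mul_left_cancel₀ h0 h3
            · intro t1 t2 hF
              have h2 : x₀ + e*t1 = x₀ + e*t2 := congrArg Prod.fst hF
              have h3 : e*t1 = e*t2 := by linarith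
              exact mul_left_cancel₀ h0 h3
          · intro t
            simp only [Set.mem_setOf_eq]
            linear_combination heq
      · -- hyperbola b x y + d x + e y + f = 0,  b ≠ 0
        have hM1 : (1:ℤ) ≤ M := le_trans (Int.one_le_abs hb0) hb
        have hfac : (b*x₀+e)*(b*y₀+d) = d*e - b*f := by linear_combination b*heq
        by_cases hK : d*e - b*f = 0
        · have hfac0 : (b*x₀+e)*(b*y₀+d) = 0 := by rw [hfac, hK]
          rcases mul_eq_zero.mp hfac0 with h1 | h1
          · apply Set.infinite_of_injective_forall_mem
              (f := fun t : ℤ => ((x₀, t) : ℤ × ℤ))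
            · intro t1 t2 hF
              exact congrArg Prod.snd hF
            · intro t
              simp only [Set.mem_setOf_eq]
              linear_combination heq + (t - y₀)*h1
          · apply Set.infinite_of_injective_forall_mem
              (f := fun t : ℤ => ((t, y₀) : ℤ × ℤ))
            · intro t1 t2 hF
              exact congrArg Prod.fst hF
            · intro t
              simp only [Set.mem_setOf_eq]
              linear_combination heq + (t - x₀)*h1
        · exfalso
          have hM2 : (1:ℤ) ≤ M*M := by nlinarith
          have hM21 : M ≤ M*M := by nlinarith
          have hM32 : M*M ≤ M*M*M := by nlinarith
          have hM43 : M*M*M ≤ M*M*M*M := by nlinarith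
          have hune : b*x₀+e ≠ 0 := by
            intro h0
            rw [h0, zero_mul] at hfac
            exact hK hfac.symm
          have hvne : b*y₀+d ≠ 0 := by
            intro h0
            rw [h0, mul_zero] at hfac
            exact hK hfac.symm
          have hsum := sum_abs_le_of_mul hfac hK
          have hde2 : |d*e - b*f| ≤ 2*(M*M) :=
            le_trans (abs_sub_le' (d*e) (b*f)) (by linarith [absmul_le hd he, absmul_le hb hf])
          have h1 : |b*x₀+e| ≤ 2*(M*M) := by
            linarith [Int.one_le_abs hvne]
          have h2 : |b*y₀+d| ≤ 2*(M*M) := by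
            linarith [Int.one_le_abs hune]
          have hbx : |b*x₀| ≤ 2*(M*M) + M := by
            have k1 : |b*x₀| = |(b*x₀+e) - e| := by ring_nf
            rw [k1]
            linarith [abs_sub_le' (b*x₀+e) e]
          have hby : |b*y₀| ≤ 2*(M*M) + M := by
            have k1 : |b*y₀| = |(b*y₀+d) - d| := by ring_nf
            rw [k1]
            linarith [abs_sub_le' (b*y₀+d) d]
          have hx : |x₀| ≤ |b*x₀| := by
            rw [abs_mul]
            nlinarith [Int.one_le_abs hb0, abs_nonneg x₀]
          have hy : |y₀| ≤ |b*y₀| := by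
            rw [abs_mul]
            nlinarith [Int.one_le_abs hb0, abs_nonneg y₀]
          have hxf : |x₀| ≤ 20*M^4 := by linarith [hM2, hM21, hM32, hM43]
          have hyf : |y₀| ≤ 20*M^4 := by linarith [hM2, hM21, hM32, hM43]
          have := max_le hxf hyf
          linarith
    · -- a ≠ 0, c = 0 : swap variables
      have hM1 : (1:ℤ) ≤ M := le_trans (Int.one_le_abs ha0) ha
      have hbig' : 20*M^4 < max |y₀| |x₀| := by rw [max_comm |y₀| |x₀|]; exact hbig
      have h' := key 0 b a e d f M y₀ x₀ ha0 hM1 (by simpa using hcM) hb ha he hd hf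
        (by linear_combination heq) hbig'
      have himg := h'.image (Set.injOn_of_injective Prod.swap_injective)
      apply Set.Infinite.mono _ himg
      intro p hp
      obtain ⟨q, hq, rfl⟩ := hp
      simp only [Set.mem_setOf_eq, Prod.fst_swap, Prod.snd_swap] at hq ⊢
      linear_combination hq
  · -- main case c ≠ 0
    have hM1 : (1:ℤ) ≤ M := le_trans (Int.one_le_abs hc0) hcM
    exact key a b c d e f M x₀ y₀ hc0 hM1 ha hb hcM hd he hf heq hbig
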